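/- In the group $E$ (central extension of $F \times F$ by $Z = \mathbb{F}_p^\times$), for lifts $\widetilde{(x,\lambda^m)}$ of $((x,\lambda^m),1)$ and $\widetilde{(y,\lambda^n)}$ of $(1,(y,\lambda^n))$, the commutator satisfies $[\widetilde{(x,\lambda^m)}, \widetilde{(y,\lambda^n)}] = \lambda^{-mn} \in Z$, independent of the choice of lifts. -/
import Mathlib


/-- The underlying set of the group `E`: tuples `(x, y, λ^m, λ^n, μ)` with
`x, y ∈ 𝔽_p`, exponents `m, n` recorded in `ℤ/(p-1) ≅ 𝔽_p^×` (via the fixed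
generator `λ`), and `μ ∈ 𝔽_p^×`. -/
abbrev Ecar (p : ℕ) : Type :=
  ZMod p × ZMod p × ZMod (p - 1) × ZMod (p - 1) × (ZMod p)ˣ

/-- The multiplication of `E`:
`(x₁,y₁,λ^{m₁},λ^{n₁},μ₁)·(x₂,y₂,λ^{m₂},λ^{n₂},μ₂)
  = (x₁+λ^{m₁}x₂, y₁+λ^{n₁}y₂, λ^{m₁+m₂}, λ^{n₁+n₂}, μ₁μ₂λ^{n₁m₂})`. -/
def Emul (p : ℕ) (lam : (ZMod p)ˣ) (a b : Ecar p) : Ecar p :=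
  (a.1 + ((lam ^ (a.2.2.1).val : (ZMod p)ˣ) : ZMod p) * b.1,
   a.2.1 + ((lam ^ (a.2.2.2.1).val : (ZMod p)ˣ) : ZMod p) * b.2.1,
   a.2.2.1 + b.2.2.1,
   a.2.2.2.1 + b.2.2.2.1,
   a.2.2.2.2 * b.2.2.2.2 * lam ^ ((a.2.2.2.1).val * (b.2.2.1).val))

/-- The identity element `(0,0,λ⁰,λ⁰,1)` of `E`. -/
def Eone (p : ℕ) : Ecar p := (0, 0, 0, 0, 1)

/-- The map `η : 𝔽_p^× → E`, `μ ↦ (0,0,1,1,μ)`, identifying `Z = 𝔽_p^×` with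
the centre of the extension. -/
def etaE (p : ℕ) (mu : (ZMod p)ˣ) : Ecar p := (0, 0, 0, 0, mu)

/-- In the group `E` (central extension of `F × F` by `Z = 𝔽_p^×`), any lift of
`((x,λ^m), 1)` has the form `g = (x, 0, λ^m, λ⁰, μ)` and any lift of
`(1, (y,λ^n))` has the form `h = (0, y, λ⁰, λ^n, ν)`; the commutator
`[g,h] = g⁻¹h⁻¹gh` equals `λ^{-mn} ∈ Z`, independently of the choices of the
lifts (i.e. of `μ` and `ν`).  Equivalently, `g·h = (h·g)·η(λ^{mn})⁻¹`. -/
theorem stmt_9 (p : ℕ) (hp : p.Prime)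
    (lam : (ZMod p)ˣ) (hlam : ∀ u : (ZMod p)ˣ, u ∈ Subgroup.zpowers lam)
    (x y : ZMod p) (m n : ZMod (p - 1)) (mu nu : (ZMod p)ˣ)
    (g h : Ecar p)
    (hg : g = (x, 0, m, 0, mu)) (hh : h = (0, y, 0, n, nu)) :
    Emul p lam g h
      = Emul p lam (Emul p lam h g) (etaE p (lam ^ (m.val * n.val))⁻¹) := by
  have hz : (0 : ZMod (p - 1)).val = 0 := by
    haveI : NeZero (p - 1) := ⟨Nat.sub_ne_zero_of_lt hp.one_lt⟩
    exact ZMod.val_zero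
  subst hg hh
  simp only [Emul, etaE, hz, pow_zero, Units.val_one, one_mul, mul_zero, mul_one,
    add_zero, zero_add, Nat.zero_mul, Nat.mul_zero]
  refine Prod.ext rfl (Prod.ext rfl (Prod.ext rfl (Prod.ext rfl ?_)))
  show mu * nu = nu * mu * lam ^ (n.val * m.val) * (lam ^ (m.val * n.val))⁻¹
  rw [Nat.mul_comm n.val m.val, mul_inv_cancel_right, mul_comm]
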